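/- Let R be a commutative ring, t ∈ R a non-zero-divisor, and φ = X + F(X) ∈ GA_n(R) with F ∈ tR[X]^n. Then Ψ_t(φ) = Z + (1/t)F(X + tZ) lies in GA_n(R[X]) and is elementarily equivalent to φ^{[n]} in GA_{2n}(R): there exist products of elementary automorphisms ε, ε' over R with ε φ^{[n]} ε' = Ψ_t(φ). -/

import Mathlib

open MvPolynomial

noncomputable section

/-- An elementary automorphism of the polynomial ring: it adds to one variable `X i`
a polynomial `f` not involving `X i`, and fixes all other variables. -/
def IsElementaryAut {R : Type*} [CommRing R] {n : ℕ}
    (e : MvPolynomial (Fin n) R ≃ₐ[R] MvPolynomial (Fin n) R) : Prop :=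
  ∃ (i : Fin n) (f : MvPolynomial (Fin n) R), degreeOf i f = 0 ∧
    e (X i) = X i + f ∧ ∀ j : Fin n, j ≠ i → e (X j) = X j

/-- `EA R n`: the subgroup generated by elementary automorphisms. -/
def EA (R : Type*) [CommRing R] (n : ℕ) :
    Subgroup (MvPolynomial (Fin n) R ≃ₐ[R] MvPolynomial (Fin n) R) :=
  Subgroup.closure {e | IsElementaryAut e}

/-- A linear automorphism: each variable is sent to a homogeneous polynomial of degree 1. -/
def IsLinearAut {R : Type*} [CommRing R] {n : ℕ}
    (φ : MvPolynomial (Fin n) R ≃ₐ[R] MvPolynomial (Fin n) R) : Prop :=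
  ∀ i, (φ (X i)).IsHomogeneous 1

/-- `TA R n`: the subgroup of tame automorphisms, generated by linear and elementary ones. -/
def TA (R : Type*) [CommRing R] (n : ℕ) :
    Subgroup (MvPolynomial (Fin n) R ≃ₐ[R] MvPolynomial (Fin n) R) :=
  Subgroup.closure ({e | IsElementaryAut e} ∪ {φ | IsLinearAut φ})

/-- The Jacobian determinant of a polynomial automorphism. -/
def jacDet {R : Type*} [CommRing R] {n : ℕ}
    (φ : MvPolynomial (Fin n) R ≃ₐ[R] MvPolynomial (Fin n) R) : MvPolynomial (Fin n) R :=
  Matrix.det (Matrix.of fun i j => pderiv j (φ (X i)))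

/-- Stabilization `φ^{[m]}` of an automorphism in `n` variables to one in `n + m` variables:
it acts as `φ` on the first `n` variables and fixes the last `m` variables. -/
def stab (R : Type*) [CommRing R] (n m : ℕ)
    (φ : MvPolynomial (Fin n) R ≃ₐ[R] MvPolynomial (Fin n) R) :
    MvPolynomial (Fin (n + m)) R ≃ₐ[R] MvPolynomial (Fin (n + m)) R :=
  ((renameEquiv R (((finSumFinEquiv (m := n) (n := m)).symm).trans
      (Equiv.sumComm (Fin n) (Fin m)))).trans
    ((sumAlgEquiv R (Fin m) (Fin n)).trans
      ((mapAlgEquiv (Fin m) φ).trans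
        ((sumAlgEquiv R (Fin m) (Fin n)).symm.trans
          (renameEquiv R ((Equiv.sumComm (Fin m) (Fin n)).trans finSumFinEquiv))))))



section Aux
variable {R : Type*} [CommRing R] {n m : ℕ}
  (φ : MvPolynomial (Fin n) R ≃ₐ[R] MvPolynomial (Fin n) R)

lemma iterToSum_C_eq {S₁ S₂ : Type*} (p : MvPolynomial S₂ R) :
    iterToSum R S₁ S₂ (C p) = rename Sum.inr p := by
  have : (iterToSum R S₁ S₂).comp (C : MvPolynomial S₂ R →+* _) =
      (rename (Sum.inr : S₂ → S₁ ⊕ S₂)).toRingHom := by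
    apply MvPolynomial.ringHom_ext
    · intro a; simp [iterToSum_C_C]
    · intro c; simp [iterToSum_C_X]
  exact RingHom.congr_fun this p

lemma sumAlgEquiv_symm_eq {S₁ S₂ : Type*} (p) :
    (sumAlgEquiv R S₁ S₂).symm p = iterToSum R S₁ S₂ p := by
  have : ((sumAlgEquiv R S₁ S₂).symm : MvPolynomial S₁ (MvPolynomial S₂ R) →+* _) =
      iterToSum R S₁ S₂ := by
    refine ringHom_ext' (ringHom_ext (fun r => ?_) (fun s => ?_)) (fun s => ?_)
    · simp [sumAlgEquiv_symm_C_C, iterToSum_C_C]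
    · simp [sumAlgEquiv_symm_C_X, iterToSum_C_X]
    · simp [sumAlgEquiv_symm_X, iterToSum_X]
  exact RingHom.congr_fun this p

lemma stab_X_castAdd (i : Fin n) :
    stab R n m φ (X (Fin.castAdd m i)) = rename (Fin.castAdd m) (φ (X i)) := by
  simp only [stab, AlgEquiv.trans_apply, renameEquiv_apply, Equiv.coe_trans,
    Function.comp_apply, rename_X, finSumFinEquiv_symm_apply_castAdd, Equiv.sumComm_apply,
    Sum.swap_inl, mapAlgEquiv_apply, sumAlgEquiv_symm_eq]
  rw [show (sumAlgEquiv R (Fin m) (Fin n)) (X (Sum.inr i)) = C (X i) from sumAlgEquiv_X_inr _ _ _ i]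
  rw [map_C, iterToSum_C_eq, rename_rename]
  congr 1

lemma stab_X_natAdd (i : Fin m) :
    stab R n m φ (X (Fin.natAdd n i)) = X (Fin.natAdd n i) := by
  simp only [stab, AlgEquiv.trans_apply, renameEquiv_apply, Equiv.coe_trans,
    Function.comp_apply, rename_X, finSumFinEquiv_symm_apply_natAdd, Equiv.sumComm_apply,
    Sum.swap_inr, mapAlgEquiv_apply, sumAlgEquiv_symm_eq]
  rw [show (sumAlgEquiv R (Fin m) (Fin n)) (X (Sum.inl i)) = X i from sumAlgEquiv_X_inl _ _ _ i]
  rw [show ((map (φ : MvPolynomial (Fin n) R →+* MvPolynomial (Fin n) R))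
      (X i : MvPolynomial (Fin m) (MvPolynomial (Fin n) R))) = X i from map_X _ i]
  rw [iterToSum_X, rename_X]
  simp

lemma stab_rename_castAdd (p : MvPolynomial (Fin n) R) :
    stab R n m φ (rename (Fin.castAdd m) p) = rename (Fin.castAdd m) (φ p) := by
  have : (stab R n m φ).toAlgHom.comp (rename (Fin.castAdd m)) =
      ((rename (Fin.castAdd m)).comp φ.toAlgHom) := by
    apply algHom_ext
    intro i
    simp [stab_X_castAdd]
  exact AlgHom.congr_fun this p

lemma algEquiv_C_mul {N : ℕ} (f : MvPolynomial (Fin N) R ≃ₐ[R] MvPolynomial (Fin N) R)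
    (t : R) (p : MvPolynomial (Fin N) R) : f (C t * p) = C t * f p := by
  rw [show (C t : MvPolynomial (Fin N) R) = algebraMap R _ t from rfl, map_mul,
    AlgEquiv.commutes]

end Aux

section Aux2
variable {R : Type*} [CommRing R] {n : ℕ}

variable {R : Type*} [CommRing R] {n : ℕ}

/-- helper ext lemma -/
lemma algEquiv_ext' {N : ℕ} {f g : MvPolynomial (Fin N) R ≃ₐ[R] MvPolynomial (Fin N) R}
    (h : ∀ j, f (X j) = g (X j)) : f = g := by
  apply AlgEquiv.coe_algHom_injective
  exact algHom_ext h

/-- substitution map for sh -/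
def shv (c : (Fin n ⊕ Fin n) ≃ Fin (n + n)) (g : Fin n → MvPolynomial (Fin n) R)
    (j : Fin (n + n)) : MvPolynomial (Fin (n + n)) R :=
  X j + Sum.elim (fun _ => 0) (fun i => rename (c ∘ Sum.inl) (g i)) (c.symm j)

lemma shv_inl (c) (g : Fin n → MvPolynomial (Fin n) R) (i : Fin n) :
    shv c g (c (Sum.inl i)) = X (c (Sum.inl i)) := by simp [shv]

lemma shv_inr (c) (g : Fin n → MvPolynomial (Fin n) R) (i : Fin n) :
    shv c g (c (Sum.inr i)) = X (c (Sum.inr i)) + rename (c ∘ Sum.inl) (g i) := by simp [shv]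

lemma aeval_shv_rename (c) (g : Fin n → MvPolynomial (Fin n) R) (p : MvPolynomial (Fin n) R) :
    aeval (shv c g) (rename (c ∘ Sum.inl) p) = rename (c ∘ Sum.inl) p := by
  rw [aeval_rename]
  have : (shv c g) ∘ (c ∘ Sum.inl) = X ∘ (c ∘ Sum.inl) := by
    funext k; simp [shv]
  rw [this]
  rw [rename_eq_aeval]

def sh (c : (Fin n ⊕ Fin n) ≃ Fin (n + n)) (g : Fin n → MvPolynomial (Fin n) R) :
    MvPolynomial (Fin (n + n)) R ≃ₐ[R] MvPolynomial (Fin (n + n)) R :=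
  AlgEquiv.ofAlgHom (aeval (shv c g)) (aeval (shv c (fun i => -(g i))))
    (by
      apply algHom_ext
      intro j
      obtain ⟨s, rfl⟩ := c.surjective j
      cases s with
      | inl i => simp [shv_inl]
      | inr i =>
        simp only [AlgHom.comp_apply, AlgHom.id_apply, aeval_X, shv_inr, map_add,
          aeval_shv_rename, map_neg]
        ring)
    (by
      apply algHom_ext
      intro j
      obtain ⟨s, rfl⟩ := c.surjective j
      cases s with
      | inl i => simp [shv_inl]
      | inr i =>
        simp only [AlgHom.comp_apply, AlgHom.id_apply, aeval_X, shv_inr, map_add,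
          aeval_shv_rename, map_neg]
        ring)

lemma sh_inl (c) (g : Fin n → MvPolynomial (Fin n) R) (i : Fin n) :
    sh c g (X (c (Sum.inl i))) = X (c (Sum.inl i)) := by
  simp [sh, shv_inl]

lemma sh_inr (c) (g : Fin n → MvPolynomial (Fin n) R) (i : Fin n) :
    sh c g (X (c (Sum.inr i))) = X (c (Sum.inr i)) + rename (c ∘ Sum.inl) (g i) := by
  simp [sh, shv_inr]

lemma sh_rename (c) (g : Fin n → MvPolynomial (Fin n) R) (p : MvPolynomial (Fin n) R) :
    sh c g (rename (c ∘ Sum.inl) p) = rename (c ∘ Sum.inl) p := by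
  simp only [sh, AlgEquiv.ofAlgHom_apply]
  exact aeval_shv_rename c g p

lemma sh_single_elementary (c : (Fin n ⊕ Fin n) ≃ Fin (n + n))
    (b : MvPolynomial (Fin n) R) (a : Fin n) :
    IsElementaryAut (R := R) (sh c (fun i => if i = a then b else 0)) := by
  refine ⟨c (Sum.inr a), rename (c ∘ Sum.inl) b, ?_, ?_, ?_⟩
  · classical
    rw [degreeOf_def]
    rw [Multiset.count_eq_zero]
    intro hmem
    have hv : c (Sum.inr a) ∈ (rename (c ∘ Sum.inl) b).vars := by
      rw [vars_def]; exact Multiset.mem_toFinset.mpr hmem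
    obtain ⟨x, _, hx⟩ := Finset.mem_image.mp (vars_rename _ _ hv)
    exact Sum.inl_ne_inr (c.injective hx)
  · rw [sh_inr]; simp
  · intro j hj
    obtain ⟨s, rfl⟩ := c.surjective j
    cases s with
    | inl i => exact sh_inl c _ i
    | inr i =>
      rw [sh_inr]
      have : i ≠ a := fun h => hj (by rw [h])
      simp [this]

lemma sh_mem_EA (c : (Fin n ⊕ Fin n) ≃ Fin (n + n)) (g : Fin n → MvPolynomial (Fin n) R) :
    sh c g ∈ EA R (n + n) := by
  classical
  have key : ∀ s : Finset (Fin n), sh c (fun i => if i ∈ s then g i else 0) ∈ EA R (n + n) := by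
    intro s
    induction s using Finset.induction with
    | empty =>
      have : sh c (fun i => if i ∈ (∅ : Finset (Fin n)) then g i else 0) = 1 := by
        apply algEquiv_ext'
        intro j
        obtain ⟨s, rfl⟩ := c.surjective j
        cases s with
        | inl i => simp [sh_inl]
        | inr i => simp [sh_inr]
      rw [this]; exact one_mem _
    | @insert a s ha ih =>
      have heq : sh c (fun i => if i ∈ insert a s then g i else 0) =
          sh c (fun i => if i ∈ s then g i else 0) * sh c (fun i => if i = a then g a else 0) := by
        apply algEquiv_ext'
        intro j
        obtain ⟨s', rfl⟩ := c.surjective j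
        cases s' with
        | inl i => simp [sh_inl]
        | inr i =>
          rw [AlgEquiv.mul_apply, sh_inr, sh_inr]
          by_cases hia : i = a
          · subst hia
            rw [if_pos rfl, if_pos (Finset.mem_insert_self i s)]
            rw [map_add, sh_inr, if_neg ha, sh_rename]
            simp
          · rw [if_neg hia, map_zero, map_add, map_zero, add_zero, sh_inr]
            simp [Finset.mem_insert, hia]
      rw [heq]
      exact mul_mem ih (Subgroup.subset_closure (sh_single_elementary c (g a) a))
  have := key Finset.univ
  simpa using this

lemma sh_rename_other (c : (Fin n ⊕ Fin n) ≃ Fin (n + n))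
    (g : Fin n → MvPolynomial (Fin n) R) (p : MvPolynomial (Fin n) R) :
    sh c g (rename (c ∘ Sum.inr) p) =
      aeval (fun j => X (c (Sum.inr j)) + rename (c ∘ Sum.inl) (g j)) p := by
  show aeval (shv c g) (rename (c ∘ Sum.inr) p) = _
  rw [aeval_rename]
  have : shv c g ∘ ⇑c ∘ Sum.inr = fun j => X (c (Sum.inr j)) + rename (⇑c ∘ Sum.inl) (g j) := by
    funext j
    simp [shv]
  rw [this]

end Aux2

/-- Let `t ∈ R` be a non-zero-divisor and `φ = X + F(X) ∈ GA_n(R)` with `F ∈ tR[X]^n`,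
say `F = t·F'`.  Then `Ψ_t(φ) = Z + (1/t)F(X + tZ) = Z + F'(X + tZ)` lies in `GA_n(R[X])`
(formalized as the automorphism `Ψφ` of the `2n`-variable polynomial ring over `R` fixing
the `X`-block), and it is elementarily equivalent to `φ^{[n]}` in `GA_{2n}(R)`: there are
products of elementary automorphisms `ε, ε'` with `ε φ^{[n]} ε' = Ψ_t(φ)`. -/
theorem Psi_t_elementarily_equivalent_stab
    (R : Type*) [CommRing R] (t : R) (ht : t ∈ nonZeroDivisors R) (n : ℕ)
    (F' : Fin n → MvPolynomial (Fin n) R)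
    (φ : MvPolynomial (Fin n) R ≃ₐ[R] MvPolynomial (Fin n) R)
    (hφ : ∀ i, φ (X i) = X i + C t * F' i)
    (Ψφ : MvPolynomial (Fin (n + n)) R ≃ₐ[R] MvPolynomial (Fin (n + n)) R)
    (hΨ1 : ∀ i : Fin n, Ψφ (X (Fin.castAdd n i)) = X (Fin.castAdd n i))
    (hΨ2 : ∀ i : Fin n, Ψφ (X (Fin.natAdd n i)) = X (Fin.natAdd n i) +
      aeval (fun j : Fin n => X (Fin.castAdd n j) + C t * X (Fin.natAdd n j)) (F' i)) :
    ∃ ε ε' : MvPolynomial (Fin (n + n)) R ≃ₐ[R] MvPolynomial (Fin (n + n)) R,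
      ε ∈ EA R (n + n) ∧ ε' ∈ EA R (n + n) ∧
      ε * stab R n n φ * ε' = Ψφ := by
  classical
  set cZ : (Fin n ⊕ Fin n) ≃ Fin (n + n) := finSumFinEquiv with hcZ
  set cX : (Fin n ⊕ Fin n) ≃ Fin (n + n) :=
    (Equiv.sumComm (Fin n) (Fin n)).trans finSumFinEquiv with hcX
  have hcZl : ∀ i, cZ (Sum.inl i) = Fin.castAdd n i := fun i => finSumFinEquiv_apply_left i
  have hcZr : ∀ i, cZ (Sum.inr i) = Fin.natAdd n i := fun i => finSumFinEquiv_apply_right i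
  have hcXl : ∀ i, cX (Sum.inl i) = Fin.natAdd n i := fun i => finSumFinEquiv_apply_right i
  have hcXr : ∀ i, cX (Sum.inr i) = Fin.castAdd n i := fun i => finSumFinEquiv_apply_left i
  have hfZ : (cZ : Fin n ⊕ Fin n → Fin (n + n)) ∘ Sum.inl = Fin.castAdd n := funext hcZl
  have hfX : (cX : Fin n ⊕ Fin n → Fin (n + n)) ∘ Sum.inl = Fin.natAdd n := funext hcXl
  have hfXr : (cX : Fin n ⊕ Fin n → Fin (n + n)) ∘ Sum.inr = Fin.castAdd n := funext hcXr
  set ε : MvPolynomial (Fin (n + n)) R ≃ₐ[R] MvPolynomial (Fin (n + n)) R :=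
    sh cX (fun i => C t * X i) with hε
  set σ : MvPolynomial (Fin (n + n)) R ≃ₐ[R] MvPolynomial (Fin (n + n)) R :=
    sh cX (fun i => -(C t * X i)) with hσ
  set ω : MvPolynomial (Fin (n + n)) R ≃ₐ[R] MvPolynomial (Fin (n + n)) R :=
    sh cZ (fun i => φ.symm (F' i)) with hω
  refine ⟨ε, ω * σ, sh_mem_EA _ _, mul_mem (sh_mem_EA _ _) (sh_mem_EA _ _), ?_⟩
  -- concrete descriptions of the generators' images
  have hσc : ∀ i, σ (X (Fin.castAdd n i)) =
      X (Fin.castAdd n i) - C t * X (Fin.natAdd n i) := by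
    intro i
    have h := sh_inr cX (fun i => -(C t * X i)) i
    rw [hcXr, hfX] at h
    rw [h, map_neg, map_mul, rename_C, rename_X]
    ring
  have hσn : ∀ i, σ (X (Fin.natAdd n i)) = X (Fin.natAdd n i) := by
    intro i
    have h := sh_inl cX (fun i => -(C t * X i)) i
    rwa [hcXl] at h
  have hεc : ∀ i, ε (X (Fin.castAdd n i)) =
      X (Fin.castAdd n i) + C t * X (Fin.natAdd n i) := by
    intro i
    have h := sh_inr cX (fun i => C t * X i) i
    rw [hcXr, hfX] at h
    rw [h, map_mul, rename_C, rename_X]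
  have hεn : ∀ i, ε (X (Fin.natAdd n i)) = X (Fin.natAdd n i) := by
    intro i
    have h := sh_inl cX (fun i => C t * X i) i
    rwa [hcXl] at h
  have hωc : ∀ i, ω (X (Fin.castAdd n i)) = X (Fin.castAdd n i) := by
    intro i
    have h := sh_inl cZ (fun i => φ.symm (F' i)) i
    rwa [hcZl] at h
  have hωn : ∀ i, ω (X (Fin.natAdd n i)) =
      X (Fin.natAdd n i) + rename (Fin.castAdd n) (φ.symm (F' i)) := by
    intro i
    have h := sh_inr cZ (fun i => φ.symm (F' i)) i
    rwa [hcZr, hfZ] at h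
  have hωr : ∀ p : MvPolynomial (Fin n) R,
      ω (rename (Fin.castAdd n) p) = rename (Fin.castAdd n) p := by
    intro p
    have h := sh_rename cZ (fun i => φ.symm (F' i)) p
    rwa [hfZ] at h
  have hεr : ∀ p : MvPolynomial (Fin n) R,
      ε (rename (Fin.castAdd n) p) =
        aeval (fun j : Fin n => X (Fin.castAdd n j) + C t * X (Fin.natAdd n j)) p := by
    intro p
    have h := sh_rename_other cX (fun i => C t * X i) p
    rw [hfXr] at h
    rw [h]
    have he : (fun j : Fin n => X (cX (Sum.inr j)) + rename (⇑cX ∘ Sum.inl) (C t * X j)) =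
        fun j => X (Fin.castAdd n j) + C t * X (Fin.natAdd n j) := by
      funext j
      rw [hcXr, hfX, map_mul, rename_C, rename_X]
    rw [he]
  -- the verification on generators
  apply algEquiv_ext'
  intro j
  obtain ⟨s, rfl⟩ := (finSumFinEquiv (m := n) (n := n)).surjective j
  have hstabG : ∀ p : MvPolynomial (Fin n) R, stab R n n φ (rename (Fin.castAdd n) p)
      = rename (Fin.castAdd n) (φ p) := fun p => stab_rename_castAdd φ p
  cases s with
  | inl i =>
    rw [finSumFinEquiv_apply_left]
    rw [AlgEquiv.mul_apply, AlgEquiv.mul_apply, AlgEquiv.mul_apply]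
    rw [hσc, map_sub, algEquiv_C_mul, hωc, hωn]
    rw [map_sub, algEquiv_C_mul, map_add, stab_X_castAdd, stab_X_natAdd, hstabG,
      AlgEquiv.apply_symm_apply, hφ]
    rw [show (rename (Fin.castAdd n)) (X i + C t * F' i) =
        X (Fin.castAdd n i) + C t * rename (Fin.castAdd n) (F' i) by
      rw [map_add, map_mul, rename_C, rename_X]]
    rw [show X (Fin.castAdd n i) + C t * (rename (Fin.castAdd n)) (F' i) -
        C t * (X (Fin.natAdd n i) + (rename (Fin.castAdd n)) (F' i)) =
        X (Fin.castAdd n i) - C t * X (Fin.natAdd n i) by ring]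
    rw [map_sub, algEquiv_C_mul, hεc, hεn, hΨ1]
    ring
  | inr i =>
    rw [finSumFinEquiv_apply_right]
    rw [AlgEquiv.mul_apply, AlgEquiv.mul_apply, AlgEquiv.mul_apply]
    rw [hσn, hωn, map_add, stab_X_natAdd, hstabG, AlgEquiv.apply_symm_apply,
      map_add, hεn, hεr, hΨ2]


end
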